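/- For any two finite metric spaces (X,d_X) and (Y,d_Y), the Gromov–Hausdorff distance between their single-linkage ultrametric spaces is at most the Gromov–Hausdorff distance between themselves: d_GH((X,u_SL^X),(Y,u_SL^Y)) ≤ d_GH((X,d_X),(Y,d_Y)). -/
import Mathlib


/-- A distance function `d` is a metric. -/
def IsMetric {X : Type*} (d : X → X → ℝ) : Prop :=
  (∀ x y, d x y = d y x) ∧ (∀ x y, d x y = 0 ↔ x = y) ∧ (∀ x y z, d x z ≤ d x y + d y z)

/-- A distance function is an ultrametric: a metric satisfying the strong triangle
inequality. -/
def IsUltrametricD {X : Type*} (d : X → X → ℝ) : Prop :=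
  IsMetric d ∧ ∀ x y z, d x z ≤ max (d x y) (d y z)

/-- The maximum of the consecutive distances along the chain `x :: l ++ [y]`. -/
def chainMax {X : Type*} (d : X → X → ℝ) : X → List X → X → ℝ
  | x, [], y => d x y
  | x, z :: l, y => max (d x z) (chainMax d z l y)

/-- The single-linkage ultrametric: the minimum over all chains from `x` to `y`
of the maximum of the consecutive distances along the chain. -/
noncomputable def uSL {X : Type*} (d : X → X → ℝ) (x y : X) : ℝ :=
  sInf { r | ∃ l : List X, chainMax d x l y = r }

/-- A correspondence between `X` and `Y`: every point of `X` and every point of `Y`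
occurs in some pair. -/
def IsCorr {X Y : Type*} (τ : Set (X × Y)) : Prop :=
  (∀ x, ∃ y, (x, y) ∈ τ) ∧ (∀ y, ∃ x, (x, y) ∈ τ)

/-- The distortion of a correspondence: the supremum of `|d_X(x,x') − d_Y(y,y')|`
over pairs `(x,y), (x',y')` in the correspondence. -/
noncomputable def corrDist {X Y : Type*} (dX : X → X → ℝ) (dY : Y → Y → ℝ)
    (τ : Set (X × Y)) : ℝ :=
  sSup { v | ∃ p ∈ τ, ∃ q ∈ τ, v = |dX p.1 q.1 - dY p.2 q.2| }

/-- The Gromov–Hausdorff distance: half the infimum over correspondences of their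
distortion. -/
noncomputable def ghDist {X Y : Type*} (dX : X → X → ℝ) (dY : Y → Y → ℝ) : ℝ :=
  (1 / 2) * sInf { r | ∃ τ : Set (X × Y), IsCorr τ ∧ corrDist dX dY τ = r }

/-- Single linkage value between two blocks: minimal cross distance. -/
noncomputable def ellSL {X : Type*} (d : X → X → ℝ) (A B : Finset X) : ℝ :=
  sInf { r | ∃ a ∈ A, ∃ b ∈ B, d a b = r }

/-- Complete linkage value between two blocks: maximal cross distance. -/
noncomputable def ellCL {X : Type*} (d : X → X → ℝ) (A B : Finset X) : ℝ :=
  sSup { r | ∃ a ∈ A, ∃ b ∈ B, d a b = r }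

/-- Average linkage value between two blocks: average cross distance. -/
noncomputable def ellAL {X : Type*} (d : X → X → ℝ) (A B : Finset X) : ℝ :=
  (∑ a ∈ A, ∑ b ∈ B, d a b) / (A.card * B.card)

lemma isMetric_nonneg {X : Type*} {d : X → X → ℝ} (h : IsMetric d) (x y : X) : 0 ≤ d x y := by
  have h0 : d x x = 0 := (h.2.1 x x).mpr rfl
  have ht := h.2.2 x y x
  have hs := h.1 y x
  rw [h0] at ht
  linarith

lemma chainMax_nonneg {X : Type*} {d : X → X → ℝ} (hd : ∀ a b, 0 ≤ d a b) :
    ∀ (l : List X) (x y : X), 0 ≤ chainMax d x l y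
  | [], x, y => hd x y
  | z :: l, x, y => le_trans (hd x z) (le_max_left _ _)

lemma uSL_le_chainMax {X : Type*} {d : X → X → ℝ} (hd : ∀ a b, 0 ≤ d a b)
    (x y : X) (l : List X) : uSL d x y ≤ chainMax d x l y :=
  csInf_le ⟨0, by rintro r ⟨l', rfl⟩; exact chainMax_nonneg hd l' x y⟩ ⟨l, rfl⟩

lemma uSL_le_uSL_add {X Y : Type*} (dX : X → X → ℝ) (dY : Y → Y → ℝ)
    (hnnX : ∀ a b, 0 ≤ dX a b)
    (R : X → Y → Prop) (hR : ∀ y, ∃ x, R x y) (c : ℝ)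
    (hc : ∀ a b a' b', R a b → R a' b' → dX a a' ≤ dY b b' + c)
    {x x' : X} {y y' : Y} (hx : R x y) (hx' : R x' y') :
    uSL dX x x' ≤ uSL dY y y' + c := by
  choose f hf using hR
  have chain : ∀ (l : List Y) (a : X) (b : Y), R a b →
      chainMax dX a (l.map f) x' ≤ chainMax dY b l y' + c := by
    intro l
    induction l with
    | nil => intro a b hab; simpa [chainMax] using hc a b x' y' hab hx'
    | cons z t ih =>
      intro a b hab
      simp only [List.map_cons, chainMax]
      have h1 : dX a (f z) ≤ dY b z + c := hc _ _ _ _ hab (hf z)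
      have h2 := ih (f z) z (hf z)
      calc max (dX a (f z)) (chainMax dX (f z) (t.map f) x')
          ≤ max (dY b z + c) (chainMax dY z t y' + c) := max_le_max h1 h2
        _ = max (dY b z) (chainMax dY z t y') + c := max_add_add_right _ _ _
  have hle : ∀ r ∈ {r | ∃ l : List Y, chainMax dY y l y' = r}, uSL dX x x' - c ≤ r := by
    rintro r ⟨l, rfl⟩
    have h := le_trans (uSL_le_chainMax hnnX x x' (l.map f)) (chain l x y hx)
    linarith
  have h : uSL dX x x' - c ≤ uSL dY y y' := le_csInf ⟨dY y y', [], rfl⟩ hle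
  linarith

lemma corr_set_bddAbove {X Y : Type*} [Fintype X] [Fintype Y]
    (dX : X → X → ℝ) (dY : Y → Y → ℝ) (τ : Set (X × Y)) :
    BddAbove {v | ∃ p ∈ τ, ∃ q ∈ τ, v = |dX p.1 q.1 - dY p.2 q.2|} := by
  apply Set.Finite.bddAbove
  apply Set.Finite.subset
    (Set.finite_range (fun pq : (X × Y) × (X × Y) =>
      |dX pq.1.1 pq.2.1 - dY pq.1.2 pq.2.2|))
  rintro v ⟨p, hp, q, hq, rfl⟩
  exact ⟨(p, q), rfl⟩

lemma abs_le_corrDist {X Y : Type*} [Fintype X] [Fintype Y]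
    (dX : X → X → ℝ) (dY : Y → Y → ℝ) {τ : Set (X × Y)} {p q : X × Y}
    (hp : p ∈ τ) (hq : q ∈ τ) :
    |dX p.1 q.1 - dY p.2 q.2| ≤ corrDist dX dY τ :=
  le_csSup (corr_set_bddAbove dX dY τ) ⟨p, hp, q, hq, rfl⟩

lemma corrDist_nonneg {X Y : Type*} [Fintype X] [Fintype Y] [Nonempty X]
    (dX : X → X → ℝ) (dY : Y → Y → ℝ) {τ : Set (X × Y)} (hτ : IsCorr τ) :
    0 ≤ corrDist dX dY τ := by
  obtain ⟨y, hy⟩ := hτ.1 (Classical.arbitrary X)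
  exact le_trans (abs_nonneg _) (abs_le_corrDist dX dY hy hy)

lemma corrDist_uSL_le {X Y : Type*} [Fintype X] [Fintype Y] [Nonempty X] [Nonempty Y]
    (dX : X → X → ℝ) (dY : Y → Y → ℝ) (hdX : IsMetric dX) (hdY : IsMetric dY)
    {τ : Set (X × Y)} (hτ : IsCorr τ) :
    corrDist (uSL dX) (uSL dY) τ ≤ corrDist dX dY τ := by
  set c := corrDist dX dY τ with hc
  have hc0 : 0 ≤ c := corrDist_nonneg dX dY hτ
  apply Real.sSup_le _ hc0
  rintro v ⟨p, hp, q, hq, rfl⟩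
  have h1 : uSL dX p.1 q.1 ≤ uSL dY p.2 q.2 + c := by
    apply uSL_le_uSL_add dX dY (isMetric_nonneg hdX) (fun x y => (x, y) ∈ τ) hτ.2 c
      _ hp hq
    intro a b a' b' hab hab'
    have := (abs_le.mp (abs_le_corrDist dX dY (p := (a, b)) (q := (a', b')) hab hab')).2
    simpa using by linarith
  have h2 : uSL dY p.2 q.2 ≤ uSL dX p.1 q.1 + c := by
    apply uSL_le_uSL_add dY dX (isMetric_nonneg hdY) (fun y x => (x, y) ∈ τ) hτ.1 c
      _ hp hq
    intro a b a' b' hab hab'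
    have := (abs_le.mp (abs_le_corrDist dX dY (p := (b, a)) (q := (b', a')) hab hab')).1
    simpa using by linarith
  exact abs_le.mpr ⟨by linarith, by linarith⟩

/-- for any two finite metric spaces, the Gromov–Hausdorff distance of
their single-linkage ultrametric spaces is at most their Gromov–Hausdorff distance. -/
theorem stmt4 {X Y : Type*} [Fintype X] [Fintype Y] [Nonempty X] [Nonempty Y]
    (dX : X → X → ℝ) (dY : Y → Y → ℝ) (hdX : IsMetric dX) (hdY : IsMetric dY) :
    ghDist (uSL dX) (uSL dY) ≤ ghDist dX dY := by
  unfold ghDist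
  apply mul_le_mul_of_nonneg_left _ (by norm_num : (0:ℝ) ≤ 1 / 2)
  apply le_csInf
  · refine ⟨corrDist dX dY Set.univ, Set.univ, ⟨?_, ?_⟩, rfl⟩
    · exact fun x => ⟨Classical.arbitrary Y, Set.mem_univ _⟩
    · exact fun y => ⟨Classical.arbitrary X, Set.mem_univ _⟩
  · rintro b ⟨τ, hτ, rfl⟩
    refine le_trans (csInf_le ?_ ⟨τ, hτ, rfl⟩) (corrDist_uSL_le dX dY hdX hdY hτ)
    refine ⟨0, ?_⟩
    rintro r ⟨τ', hτ', rfl⟩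
    exact corrDist_nonneg _ _ hτ'
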